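/- (Lemma 3.) For every rational number X, every nonnegative integer c, and every nonnegative integer n, the determinant of the n×n matrix with (i,j) entry C(X, i-j+c) (1 ≤ i,j ≤ n) equals ∏_{i=1}^{n} (X+i-c)_c/(i)_c. -/

import Mathlib

open Finset

/-- Generalized binomial coefficient `C(x,k)`. -/
def gbinom (x : ℚ) (k : ℤ) : ℚ :=
  if 0 ≤ k then (∏ m ∈ Finset.range k.toNat, (x - m)) / (k.toNat.factorial : ℚ) else 0

/-- Shifted factorial `(a)_k` with integer index. -/
def poch (a : ℚ) (k : ℤ) : ℚ :=
  if 0 ≤ k then ∏ m ∈ Finset.range k.toNat, (a + m)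
  else 1 / ∏ m ∈ Finset.range (-k).toNat, (a - (m + 1))

/-- The matrix `M(x;b,c)`. -/
def Mmat (x : ℚ) (b c : ℕ) : Matrix (Fin (b + c)) (Fin (b + c)) ℚ := fun i j =>
  if (i : ℕ) < c then
    (if (j : ℕ) < b then gbinom (x + (j : ℕ)) ((i : ℕ) : ℤ)
     else gbinom (2 * x + (j : ℕ)) ((i : ℕ) : ℤ))
  else if (i : ℕ) < b then
    (if (j : ℕ) < c then 0
     else if (j : ℕ) < b then gbinom (x + (j : ℕ)) ((i : ℕ) : ℤ)
     else gbinom (2 * x + (j : ℕ)) ((i : ℕ) : ℤ))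
  else
    (if (j : ℕ) < c then 2 * gbinom (x + (j : ℕ)) (((i : ℕ) : ℤ) - (b : ℤ))
     else if (j : ℕ) < b then gbinom (x + (j : ℕ)) (((i : ℕ) : ℤ) - (b : ℤ))
     else 0)

/-- `Δ(x;b,c)`. -/
def Δdet (x : ℚ) (b c : ℕ) : ℚ := (Mmat x b c).det

/-- The matrix `M'(x;b,c)`; column index `j` of the paper is `c + j'`. -/
def M'mat (x : ℚ) (b c : ℕ) : Matrix (Fin b) (Fin b) ℚ := fun i j =>
  if c + (j : ℕ) < b then
    gbinom (x + (c : ℕ)) (((i : ℕ) : ℤ) - ((c : ℤ) + (j : ℕ)) + (c : ℤ))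
  else if (i : ℕ) < c then
    2 * gbinom (2 * x + (b : ℕ)) (((i : ℕ) : ℤ) - ((c : ℤ) + (j : ℕ)) + (b : ℤ))
  else
    gbinom (2 * x + (b : ℕ)) (((i : ℕ) : ℤ) - ((c : ℤ) + (j : ℕ)) + (b : ℤ))

/-- `Δ'(x;b,c)`. -/
def Δ'det (x : ℚ) (b c : ℕ) : ℚ := (M'mat x b c).det

open Matrix in
theorem _dummy_open : True := trivial

open Matrix

variable {R : Type*} [CommRing R]

lemma uc_comm {n : Type*} [DecidableEq n] [Fintype n] (M : Matrix n n R) {a b : n}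
    (hab : a ≠ b) (u v : n → R) :
    (M.updateCol a u).updateCol b v = (M.updateCol b v).updateCol a u := by
  ext i j
  by_cases h1 : j = b <;> by_cases h2 : j = a <;>
    simp [updateCol_apply, h1, h2, hab, hab.symm]

lemma det_col_finsum {n : Type*} [DecidableEq n] [Fintype n] {ι : Type*} [DecidableEq ι]
    (M : Matrix n n R) (j : n) (s : Finset ι) (g : ι → n → R) :
    (M.updateCol j (∑ i ∈ s, g i)).det = ∑ i ∈ s, (M.updateCol j (g i)).det := by
  induction s using Finset.induction_on with
  | empty =>
      simp only [Finset.sum_empty]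
      exact det_eq_zero_of_column_eq_zero j (fun i => by simp [updateCol_self])
  | insert _ _ hk ih =>
      rw [Finset.sum_insert hk, det_updateCol_add, ih, Finset.sum_insert hk]

lemma vec_eq_sum_single {n : Type*} [DecidableEq n] [Fintype n] (v : n → R) :
    v = ∑ i, (v i) • (Pi.single i (1:R) : n → R) := by
  funext x
  simp [Finset.sum_apply, Pi.single_apply]

lemma single_eq_one_col {n : Type*} [DecidableEq n] [Fintype n] (a : n) :
    Pi.single a (1:R) = fun j => (1 : Matrix n n R) j a := by
  funext j; simp [one_apply, Pi.single_apply]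

lemma det_swap_cols {m : ℕ} :
    ((((1 : Matrix (Fin (m+2)) (Fin (m+2)) R).updateCol (Fin.last (m+1))
        (Pi.single 0 (1:R))).updateCol 0 (Pi.single (Fin.last (m+1)) (1:R)))).det = -1 := by
  have h0L : (0 : Fin (m+2)) ≠ Fin.last (m+1) := by simp [Fin.ext_iff]
  have heq : (((1 : Matrix (Fin (m+2)) (Fin (m+2)) R).updateCol (Fin.last (m+1))
        (Pi.single 0 (1:R))).updateCol 0 (Pi.single (Fin.last (m+1)) (1:R)))
      = (1 : Matrix (Fin (m+2)) (Fin (m+2)) R).submatrix id (Equiv.swap 0 (Fin.last (m+1))) := by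
    ext i j
    by_cases h1 : j = 0
    · subst h1
      simp [updateCol_apply, one_apply, Pi.single_apply, Equiv.swap_apply_left, eq_comm]
    · by_cases h2 : j = Fin.last (m+1)
      · subst h2
        simp [updateCol_apply, one_apply, Pi.single_apply, h0L.symm,
          Equiv.swap_apply_right, eq_comm]
      · simp [updateCol_apply, one_apply, h1, h2, Equiv.swap_apply_of_ne_of_ne h1 h2]
  rw [heq, det_permute', Equiv.Perm.sign_swap h0L, det_one]
  simp

lemma det_one_updated_col {m : ℕ} (v : Fin (m+2) → R) :
    ((1 : Matrix (Fin (m+2)) (Fin (m+2)) R).updateCol 0 v).det = v 0 := by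
  rw [vec_eq_sum_single (R := R) v, det_col_finsum]
  have key : ∀ k : Fin (m+2),
      ((1 : Matrix (Fin (m+2)) (Fin (m+2)) R).updateCol 0 (v k • (Pi.single k (1:R) : Fin (m+2) → R))).det
      = if k = 0 then v 0 else 0 := by
    intro k
    rw [det_updateCol_smul]
    by_cases hk : k = 0
    · subst hk
      rw [if_pos rfl, single_eq_one_col, updateCol_eq_self, det_one, mul_one]
    · rw [if_neg hk]
      have : ((1 : Matrix (Fin (m+2)) (Fin (m+2)) R).updateCol 0 (Pi.single k (1:R))).det = 0 := by
        refine det_zero_of_column_eq (Ne.symm hk) (fun x => ?_)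
        simp [updateCol_apply, hk, Ne.symm hk, one_apply, Pi.single_apply]
      rw [this, mul_zero]
  rw [Finset.sum_congr rfl (fun k _ => key k), Finset.sum_ite_eq' Finset.univ 0 (fun _ => v 0)]
  simp [Pi.single_apply]

lemma det_two_cols {m : ℕ} (v w : Fin (m+2) → R) :
    (((1 : Matrix (Fin (m+2)) (Fin (m+2)) R).updateCol 0 v).updateCol
        (Fin.last (m+1)) w).det
      = v 0 * w (Fin.last (m+1)) - v (Fin.last (m+1)) * w 0 := by
  have h0L : (0 : Fin (m+2)) ≠ Fin.last (m+1) := by simp [Fin.ext_iff]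
  rw [vec_eq_sum_single (R := R) w, det_col_finsum]
  have key : ∀ i : Fin (m+2),
      ((((1 : Matrix (Fin (m+2)) (Fin (m+2)) R).updateCol 0 v).updateCol (Fin.last (m+1))
        (w i • (Pi.single i (1:R) : Fin (m+2) → R)))).det
      = w i * (if i = 0 then -(v (Fin.last (m+1))) else if i = Fin.last (m+1) then v 0 else 0) := by
    intro i
    rw [det_updateCol_smul]
    congr 1
    by_cases hi0 : i = 0
    · subst hi0
      rw [if_pos rfl, uc_comm _ h0L]
      rw [vec_eq_sum_single (R := R) v, det_col_finsum]
      have key2 : ∀ k : Fin (m+2),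
          ((((1 : Matrix (Fin (m+2)) (Fin (m+2)) R).updateCol (Fin.last (m+1))
            (Pi.single 0 (1:R))).updateCol 0 (v k • (Pi.single k (1:R) : Fin (m+2) → R)))).det
          = if k = Fin.last (m+1) then -(v k) else 0 := by
        intro k
        rw [det_updateCol_smul]
        by_cases hkL : k = Fin.last (m+1)
        · subst hkL
          rw [if_pos rfl, det_swap_cols, mul_neg_one]
        · rw [if_neg hkL]
          by_cases hk0 : k = 0
          · subst hk0
            have : ((((1 : Matrix (Fin (m+2)) (Fin (m+2)) R).updateCol (Fin.last (m+1))
                (Pi.single 0 (1:R))).updateCol 0 (Pi.single 0 (1:R)))).det = 0 := by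
              refine det_zero_of_column_eq h0L (fun x => ?_)
              simp [updateCol_apply, h0L, h0L.symm]
            rw [this, mul_zero]
          · have : ((((1 : Matrix (Fin (m+2)) (Fin (m+2)) R).updateCol (Fin.last (m+1))
                (Pi.single 0 (1:R))).updateCol 0 (Pi.single k (1:R)))).det = 0 := by
              refine det_zero_of_column_eq (Ne.symm hk0) (fun x => ?_)
              simp [updateCol_apply, hk0, Ne.symm hk0, hkL, one_apply, Pi.single_apply]
            rw [this, mul_zero]
      rw [Finset.sum_congr rfl (fun k _ => key2 k),
        Finset.sum_ite_eq' Finset.univ (Fin.last (m+1)) (fun k => -(v k))]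
      simp [Pi.single_apply]
    · by_cases hiL : i = Fin.last (m+1)
      · subst hiL
        rw [if_neg hi0, if_pos rfl]
        rw [single_eq_one_col]
        have : ((1 : Matrix (Fin (m+2)) (Fin (m+2)) R).updateCol 0 v).updateCol
            (Fin.last (m+1)) (fun j => (1 : Matrix (Fin (m+2)) (Fin (m+2)) R) j (Fin.last (m+1)))
            = (1 : Matrix (Fin (m+2)) (Fin (m+2)) R).updateCol 0 v := by
          have h2 : (fun j => (1 : Matrix (Fin (m+2)) (Fin (m+2)) R) j (Fin.last (m+1)))
              = fun j => ((1 : Matrix (Fin (m+2)) (Fin (m+2)) R).updateCol 0 v) j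
                  (Fin.last (m+1)) := by
            funext j; simp [updateCol_apply, h0L.symm]
          rw [h2, updateCol_eq_self]
        rw [this, det_one_updated_col]
      · rw [if_neg hi0, if_neg hiL]
        refine det_zero_of_column_eq (show i ≠ Fin.last (m+1) from hiL) (fun k => ?_)
        simp [updateCol_apply, hiL, hi0, one_apply, Pi.single_apply]
  rw [Finset.sum_congr rfl (fun i _ => key i)]
  have split : ∀ i : Fin (m+2), w i * (if i = 0 then -(v (Fin.last (m+1)))
      else if i = Fin.last (m+1) then v 0 else 0)
      = (if i = 0 then -(w i * v (Fin.last (m+1))) else 0)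
        + (if i = Fin.last (m+1) then w i * v 0 else 0) := by
    intro i
    by_cases hi0 : i = 0
    · subst hi0
      rw [if_pos rfl, if_pos rfl, if_neg h0L]
      ring
    · by_cases hiL : i = Fin.last (m+1)
      · subst hiL
        rw [if_neg hi0, if_pos rfl, if_neg hi0, if_pos rfl, zero_add]
      · simp [hi0, hiL]
  rw [Finset.sum_congr rfl (fun i _ => split i), Finset.sum_add_distrib,
    Finset.sum_ite_eq' Finset.univ (0 : Fin (m+2)) (fun i => -(w i * v (Fin.last (m+1)))),
    Finset.sum_ite_eq' Finset.univ (Fin.last (m+1)) (fun i => w i * v 0)]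
  simp [Pi.single_apply]
  ring

lemma det_outer {m : ℕ} (A : Matrix (Fin (m+2)) (Fin (m+2)) R) :
    ((A.updateCol 0 (Pi.single 0 (1:R) : Fin (m+2) → R)).updateCol (Fin.last (m+1))
        (Pi.single (Fin.last (m+1)) (1:R) : Fin (m+2) → R)).det
      = (A.submatrix (fun i : Fin m => (Fin.castSucc i).succ)
          (fun i : Fin m => (Fin.castSucc i).succ)).det := by
  have h0L : (0 : Fin (m+2)) ≠ Fin.last (m+1) := by simp [Fin.ext_iff]
  set M := (A.updateCol 0 (Pi.single 0 (1:R) : Fin (m+2) → R)).updateCol (Fin.last (m+1))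
      (Pi.single (Fin.last (m+1)) (1:R) : Fin (m+2) → R) with hM
  have hcol0 : ∀ i, M i 0 = (Pi.single 0 (1:R) : Fin (m+2) → R) i := by
    intro i
    rw [hM]
    simp [updateCol_apply, h0L]
  rw [det_succ_column_zero]
  rw [Finset.sum_eq_single 0]
  · rw [hcol0, Pi.single_eq_same]
    simp only [Fin.val_zero, pow_zero, one_mul, mul_one]
    set M' := M.submatrix Fin.succ Fin.succ with hM'
    have hcolL : ∀ i : Fin (m+1), M' i (Fin.last m) = if i = Fin.last m then (1:R) else 0 := by
      intro i
      rw [hM', submatrix_apply, Fin.succ_last, hM, updateCol_self, Pi.single_apply]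
      simp [Fin.succ_eq_last_succ]
    rw [show (0 : Fin (m+2)).succAbove = Fin.succ from Fin.succAbove_zero]
    rw [det_succ_column (M.submatrix Fin.succ Fin.succ) (Fin.last m)]
    rw [Finset.sum_eq_single (Fin.last m)]
    · rw [← hM', hcolL, if_pos rfl]
      have hsign : (-1 : R) ^ ((Fin.last m : ℕ) + (Fin.last m : ℕ)) = 1 :=
        Even.neg_one_pow ⟨(Fin.last m : ℕ), by ring⟩
      rw [hsign]
      simp only [one_mul, mul_one]
      rw [show (Fin.last m).succAbove = Fin.castSucc from Fin.succAbove_last]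
      have heq : (M'.submatrix Fin.castSucc Fin.castSucc) = A.submatrix
          (fun i : Fin m => (Fin.castSucc i).succ) (fun i : Fin m => (Fin.castSucc i).succ) := by
        ext i j
        rw [hM', submatrix_apply, submatrix_apply, submatrix_apply, hM]
        rw [updateCol_ne, updateCol_ne]
        · exact Fin.succ_ne_zero _
        · rw [Fin.succ_castSucc]
          exact Fin.ne_of_lt (Fin.castSucc_lt_last _)
      rw [← heq, hM']
    · intro b _ hb
      rw [← hM', hcolL, if_neg hb, mul_zero, zero_mul]
    · intro h; exact absurd (Finset.mem_univ _) h
  · intro b _ hb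
    rw [hcol0, Pi.single_apply, if_neg hb]
    simp
  · intro h; exact absurd (Finset.mem_univ _) h

theorem dj_mul {m : ℕ} (A : Matrix (Fin (m+2)) (Fin (m+2)) R) :
    A.det * ((A.submatrix Fin.succ Fin.succ).det * (A.submatrix Fin.castSucc Fin.castSucc).det
      - (A.submatrix Fin.succ Fin.castSucc).det * (A.submatrix Fin.castSucc Fin.succ).det)
    = A.det * (A.det * (A.submatrix (fun i : Fin m => (Fin.castSucc i).succ)
        (fun i : Fin m => (Fin.castSucc i).succ)).det) := by
  have h0L : (0 : Fin (m+2)) ≠ Fin.last (m+1) := by simp [Fin.ext_iff]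
  set L : Fin (m+2) := Fin.last (m+1) with hLdef
  set C := ((1 : Matrix (Fin (m+2)) (Fin (m+2)) R).updateCol 0
      (fun i => adjugate A i 0)).updateCol L (fun i => adjugate A i L) with hC
  have h1 : A * C = (A.updateCol 0 (A.det • (Pi.single 0 (1:R) : Fin (m+2) → R))).updateCol L
      (A.det • (Pi.single L (1:R) : Fin (m+2) → R)) := by
    ext i j
    rw [Matrix.mul_apply]
    by_cases hjL : j = L
    · subst hjL
      have hCk : ∀ k, C k L = adjugate A k L := fun k => by rw [hC, updateCol_self]
      simp_rw [hCk]
      have hmul : ∑ k, A i k * adjugate A k L = (A * adjugate A) i L := (Matrix.mul_apply).symm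
      rw [hmul, mul_adjugate, updateCol_self]
      simp [Matrix.smul_apply, Matrix.one_apply, Pi.single_apply, smul_eq_mul]
    · by_cases hj0 : j = 0
      · subst hj0
        have hCk : ∀ k, C k 0 = adjugate A k 0 := fun k => by
          rw [hC, updateCol_ne hjL, updateCol_self]
        simp_rw [hCk]
        have hmul : ∑ k, A i k * adjugate A k 0 = (A * adjugate A) i 0 := (Matrix.mul_apply).symm
        rw [hmul, mul_adjugate]
        simp [updateCol_apply, hjL, Matrix.smul_apply, Matrix.one_apply, Pi.single_apply,
          smul_eq_mul]
      · have hCk : ∀ k, C k j = (1 : Matrix (Fin (m+2)) (Fin (m+2)) R) k j := fun k => by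
          rw [hC, updateCol_ne hjL, updateCol_ne hj0]
        simp_rw [hCk, Matrix.one_apply, mul_ite, mul_one, mul_zero]
        rw [Finset.sum_ite_eq' Finset.univ j (fun k => A i k)]
        simp [updateCol_apply, hjL, hj0]
  have h2 : A.det * C.det = (A * C).det := (det_mul A C).symm
  have h3 : C.det = (adjugate A 0 0) * (adjugate A L L) - (adjugate A L 0) * (adjugate A 0 L) := by
    rw [hC, hLdef]
    exact det_two_cols _ _
  have h4 : (A * C).det = A.det * (A.det * (A.submatrix (fun i : Fin m => (Fin.castSucc i).succ)
      (fun i : Fin m => (Fin.castSucc i).succ)).det) := by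
    rw [h1, det_updateCol_smul, uc_comm _ h0L, det_updateCol_smul, uc_comm _ h0L.symm,
      hLdef, det_outer]
  have hsignL : ((-1 : R) ^ ((m+1 : ℕ))) * ((-1 : R) ^ ((m+1:ℕ))) = 1 := by
    rw [← pow_add]
    exact Even.neg_one_pow ⟨m+1, by ring⟩
  have ha00 : adjugate A 0 0 = (A.submatrix Fin.succ Fin.succ).det := by
    rw [adjugate_fin_succ_eq_det_submatrix]
    simp [Fin.succAbove_zero]
  have haLL : adjugate A L L = (A.submatrix Fin.castSucc Fin.castSucc).det := by
    rw [adjugate_fin_succ_eq_det_submatrix, hLdef]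
    rw [show (Fin.last (m+1)).succAbove = Fin.castSucc from Fin.succAbove_last]
    have : (-1 : R) ^ ((Fin.last (m+1) : ℕ) + (Fin.last (m+1) : ℕ)) = 1 :=
      Even.neg_one_pow ⟨(Fin.last (m+1) : ℕ), by ring⟩
    rw [this, one_mul]
  have haL0 : adjugate A L 0 = (-1 : R) ^ ((m+1:ℕ)) * (A.submatrix Fin.succ Fin.castSucc).det := by
    rw [adjugate_fin_succ_eq_det_submatrix, hLdef]
    rw [show (0 : Fin (m+2)).succAbove = Fin.succ from Fin.succAbove_zero,
      show (Fin.last (m+1)).succAbove = Fin.castSucc from Fin.succAbove_last]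
    norm_num
  have ha0L : adjugate A 0 L = (-1 : R) ^ ((m+1:ℕ)) * (A.submatrix Fin.castSucc Fin.succ).det := by
    rw [adjugate_fin_succ_eq_det_submatrix, hLdef]
    rw [show (0 : Fin (m+2)).succAbove = Fin.succ from Fin.succAbove_zero,
      show (Fin.last (m+1)).succAbove = Fin.castSucc from Fin.succAbove_last]
    norm_num
  calc A.det * ((A.submatrix Fin.succ Fin.succ).det * (A.submatrix Fin.castSucc Fin.castSucc).det
      - (A.submatrix Fin.succ Fin.castSucc).det * (A.submatrix Fin.castSucc Fin.succ).det)
      = A.det * ((adjugate A 0 0) * (adjugate A L L) - (adjugate A L 0) * (adjugate A 0 L)) := by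
        rw [ha00, haLL, haL0, ha0L]
        linear_combination (A.det * (A.submatrix Fin.succ Fin.castSucc).det *
          (A.submatrix Fin.castSucc Fin.succ).det) * hsignL
    _ = A.det * C.det := by rw [h3]
    _ = (A * C).det := h2
    _ = _ := h4

theorem dj {m : ℕ} (A : Matrix (Fin (m+2)) (Fin (m+2)) ℚ) :
    A.det * (A.submatrix (fun i : Fin m => (Fin.castSucc i).succ)
        (fun i : Fin m => (Fin.castSucc i).succ)).det
    = (A.submatrix Fin.succ Fin.succ).det * (A.submatrix Fin.castSucc Fin.castSucc).det
      - (A.submatrix Fin.succ Fin.castSucc).det * (A.submatrix Fin.castSucc Fin.succ).det := by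
  classical
  set G : Matrix (Fin (m+2)) (Fin (m+2)) (MvPolynomial (Fin (m+2) × Fin (m+2)) ℚ) :=
    fun i j => MvPolynomial.X (i,j) with hG
  have hmap1 : G.map (MvPolynomial.eval fun p : Fin (m+2) × Fin (m+2) =>
      if p.1 = p.2 then (1:ℚ) else 0) = (1 : Matrix (Fin (m+2)) (Fin (m+2)) ℚ) := by
    ext i j
    rw [Matrix.map_apply]
    simp [hG, Matrix.map_apply, Matrix.one_apply]
  have hGdet : G.det ≠ 0 := by
    intro h
    have h2 := congrArg (MvPolynomial.eval fun p : Fin (m+2) × Fin (m+2) =>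
      if p.1 = p.2 then (1:ℚ) else 0) h
    rw [map_zero, RingHom.map_det, RingHom.mapMatrix_apply, hmap1, det_one] at h2
    exact one_ne_zero h2
  have key := mul_left_cancel₀ hGdet (dj_mul G).symm
  -- key : G.det * inner = minors combination  (as polynomials)
  set φ : MvPolynomial (Fin (m+2) × Fin (m+2)) ℚ →+* ℚ :=
    (MvPolynomial.eval fun p : Fin (m+2) × Fin (m+2) => A p.1 p.2) with hφ
  have hmapA : G.map φ = A := by
    ext i j
    rw [Matrix.map_apply]
    simp [hG, hφ, Matrix.map_apply]
  have h3 := congrArg φ key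
  simp only [_root_.map_mul, _root_.map_sub, RingHom.map_det, RingHom.mapMatrix_apply] at h3
  simp only [← Matrix.submatrix_map, hmapA] at h3
  exact h3

-- ===================== pochhammer helper =====================

noncomputable def poch' (a : ℚ) (c : ℕ) : ℚ := ∏ m ∈ Finset.range c, (a + m)

lemma poch_eq_poch' (a : ℚ) (c : ℕ) : poch a (c : ℤ) = poch' a c := by
  rw [poch, if_pos (Int.natCast_nonneg c)]
  simp [poch']

lemma poch'_zero (a : ℚ) : poch' a 0 = 1 := by simp [poch']

lemma poch'_succ (a : ℚ) (c : ℕ) : poch' a (c+1) = poch' a c * (a + c) :=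
  Finset.prod_range_succ _ c

lemma poch'_succ' (a : ℚ) (c : ℕ) : poch' a (c+1) = a * poch' (a+1) c := by
  rw [poch', Finset.prod_range_succ']
  simp only [Nat.cast_zero, add_zero, poch']
  rw [mul_comm]
  congr 1
  refine Finset.prod_congr rfl (fun m _ => ?_)
  push_cast
  ring

lemma poch'_shift (a : ℚ) (c : ℕ) : a * poch' (a+1) c = poch' a c * (a + c) :=
  (poch'_succ' a c).symm.trans (poch'_succ a c)

lemma poch'_nat_pos (i c : ℕ) (hi : 1 ≤ i) : 0 < poch' (i:ℚ) c := by
  refine Finset.prod_pos (fun m _ => ?_)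
  have : (1:ℚ) ≤ (i:ℚ) := by exact_mod_cast hi
  positivity

lemma poch'_one (c : ℕ) : poch' (1:ℚ) c = (c.factorial : ℚ) := by
  induction c with
  | zero => simp [poch'_zero]
  | succ c ih =>
      rw [poch'_succ, ih, Nat.factorial_succ]
      push_cast
      ring

section NonInt
variable {X : ℚ} (hX : ∀ z : ℤ, X + (z:ℚ) ≠ 0)

include hX in
lemma factor_ne (i c m : ℕ) : X + i - c + m ≠ 0 := by
  have h := hX ((i:ℤ) - c + m)
  intro h2
  apply h
  rw [← h2]
  push_cast
  ring

include hX in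
lemma pochX_ne (i c d : ℕ) : poch' (X + i - c) d ≠ 0 := by
  refine Finset.prod_ne_zero_iff.mpr (fun m _ => ?_)
  exact factor_ne hX i c m

end NonInt

-- ===================== the Toeplitz matrix and product =====================

noncomputable def Dm (X : ℚ) (c n : ℕ) : Matrix (Fin n) (Fin n) ℚ :=
  fun i j => gbinom X ((i:ℤ) - (j:ℤ) + c)

noncomputable def Pp (X : ℚ) (c n : ℕ) : ℚ :=
  ∏ i ∈ Finset.Icc 1 n, poch' (X + i - c) c / poch' (i:ℚ) c

lemma Pp_zero (X : ℚ) (c : ℕ) : Pp X c 0 = 1 := by simp [Pp]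

lemma Pp_succ (X : ℚ) (c n : ℕ) :
    Pp X c (n+1) = Pp X c n * (poch' (X + (n+1:ℕ) - c) c / poch' ((n+1:ℕ):ℚ) c) := by
  rw [Pp, Pp, Finset.prod_Icc_succ_top (by omega : 1 ≤ n + 1)]

lemma Pp_ne_zero {X : ℚ} (hX : ∀ z : ℤ, X + (z:ℚ) ≠ 0) (c n : ℕ) : Pp X c n ≠ 0 := by
  refine Finset.prod_ne_zero_iff.mpr (fun i hi => ?_)
  have hi1 : 1 ≤ i := (Finset.mem_Icc.mp hi).1
  exact div_ne_zero (pochX_ne hX i c c) (ne_of_gt (poch'_nat_pos i c hi1))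

-- ===================== gbinom lemmas =====================

lemma gbinom_neg (x : ℚ) {k : ℤ} (h : k < 0) : gbinom x k = 0 :=
  if_neg (not_le.mpr h)

lemma gbinom_natCast (x : ℚ) (k : ℕ) :
    gbinom x (k:ℤ) = (∏ m ∈ Finset.range k, (x - m)) / (k.factorial : ℚ) := by
  rw [gbinom, if_pos (Int.natCast_nonneg k)]
  simp

lemma gbinom_zero (x : ℚ) : gbinom x 0 = 1 := by
  simpa using gbinom_natCast x 0

lemma gbinom_eq_poch'_div (x : ℚ) (c : ℕ) :
    gbinom x (c:ℤ) = poch' (x + 1 - c) c / poch' (1:ℚ) c := by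
  rw [gbinom_natCast, poch'_one]
  congr 1
  rw [← Finset.prod_range_reflect (fun m => x - m) c]
  refine Finset.prod_congr rfl (fun m hm => ?_)
  have hm' : m < c := Finset.mem_range.mp hm
  have : ((c - 1 - m : ℕ) : ℚ) = (c:ℚ) - 1 - m := by
    have h1 : (1:ℕ) ≤ c := by omega
    have h2 : m ≤ c - 1 := by omega
    push_cast [Nat.cast_sub h2, Nat.cast_sub h1]
    ring
  rw [this]
  ring

-- ===================== base cases =====================

lemma Dm_det_zero (X : ℚ) (c : ℕ) : (Dm X c 0).det = Pp X c 0 := by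
  rw [Matrix.det_fin_zero, Pp_zero]

lemma Dm_det_one (X : ℚ) (c : ℕ) : (Dm X c 1).det = Pp X c 1 := by
  rw [Matrix.det_fin_one]
  show gbinom X ((0:ℤ) - 0 + c) = _
  rw [zero_sub, neg_zero, zero_add, Pp]
  rw [show Finset.Icc 1 1 = {1} from rfl, Finset.prod_singleton]
  rw [gbinom_eq_poch'_div]
  norm_num

lemma Dm_det_c_zero (X : ℚ) (n : ℕ) : (Dm X 0 n).det = Pp X 0 n := by
  have htri : (Dm X 0 n).BlockTriangular OrderDual.toDual := by
    intro i j hij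
    have hij' : (i:ℕ) < (j:ℕ) := hij
    refine gbinom_neg X ?_
    push_cast
    omega
  rw [Matrix.det_of_lowerTriangular _ htri]
  have hdiag : ∀ i : Fin n, Dm X 0 n i i = 1 := by
    intro i
    show gbinom X ((i:ℤ) - i + 0) = 1
    rw [sub_self, zero_add, gbinom_zero]
  rw [Finset.prod_congr rfl (fun i _ => hdiag i), Finset.prod_const_one]
  rw [Pp]
  refine (Finset.prod_eq_one (fun i _ => ?_)).symm
  rw [poch'_zero, poch'_zero]
  norm_num

-- ===================== submatrix identifications =====================

lemma Dm_sub_ss (X : ℚ) (c n : ℕ) :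
    (Dm X c (n+2)).submatrix Fin.succ Fin.succ = Dm X c (n+1) := by
  ext i j
  show gbinom X _ = gbinom X _
  congr 1
  simp [Fin.val_succ]

lemma Dm_sub_cc (X : ℚ) (c n : ℕ) :
    (Dm X c (n+2)).submatrix Fin.castSucc Fin.castSucc = Dm X c (n+1) := by
  ext i j
  show gbinom X _ = gbinom X _
  congr 1

lemma Dm_sub_sc (X : ℚ) (c n : ℕ) :
    (Dm X c (n+2)).submatrix Fin.succ Fin.castSucc = Dm X (c+1) (n+1) := by
  ext i j
  show gbinom X _ = gbinom X _
  congr 1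
  simp [Fin.val_succ]
  push_cast
  ring

lemma Dm_sub_cs (X : ℚ) (c n : ℕ) :
    (Dm X (c+1) (n+2)).submatrix Fin.castSucc Fin.succ = Dm X c (n+1) := by
  ext i j
  show gbinom X _ = gbinom X _
  congr 1
  simp [Fin.val_succ]
  push_cast
  ring

lemma Dm_sub_inner (X : ℚ) (c n : ℕ) :
    (Dm X c (n+2)).submatrix (fun i : Fin n => (Fin.castSucc i).succ)
      (fun i : Fin n => (Fin.castSucc i).succ) = Dm X c n := by
  ext i j
  show gbinom X _ = gbinom X _
  congr 1
  simp [Fin.val_succ]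

-- ===================== product algebra =====================

lemma auxR {X : ℚ} (hX : ∀ z : ℤ, X + (z:ℚ) ≠ 0) (c' : ℕ) (n : ℕ) :
    Pp X (c'+2) n * Pp X c' n * ((X + n - (c'+1)) * ((n:ℚ) + (c'+1)))
      = Pp X (c'+1) n ^ 2 * ((X - (c'+1)) * ((c':ℚ)+1)) := by
  induction n with
  | zero =>
      simp only [Pp_zero, Nat.cast_zero, one_mul, one_pow]
      ring
  | succ n ih =>
      rw [Pp_succ, Pp_succ, Pp_succ]
      push_cast
      push_cast at ih
      set q := Pp X (c'+1) n
      set qp := Pp X (c'+2) n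
      set qm := Pp X c' n
      set N := poch' (X + (↑n + 1) - (↑c' + 1)) (c'+1) with hNdef
      set D := poch' (↑n + 1 : ℚ) (c'+1) with hDdef
      -- nonzero facts
      have hD0 : D ≠ 0 := by
        rw [hDdef]
        have h : ((n+1:ℕ):ℚ) = (↑n + 1 : ℚ) := by push_cast; ring
        rw [← h]
        exact ne_of_gt (poch'_nat_pos (n+1) (c'+1) (by omega))
      have hN0 : N ≠ 0 := by
        rw [hNdef]
        have h : (X + (↑n + 1) - (↑c' + 1)) = X + ((n+1:ℕ):ℚ) - ((c'+1:ℕ):ℚ) := by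
          push_cast; ring
        rw [h]
        exact pochX_ne hX (n+1) (c'+1) (c'+1)
      have h1 : (X + (↑n+1) - (↑c'+1)) ≠ 0 := by
        have := factor_ne hX (n+1) (c'+1) 0
        push_cast at this
        simpa using this
      have h3 : ((n:ℚ) + 1 + ↑c') ≠ 0 := by positivity
      have h4 : ((n:ℚ) + 1 + (↑c' + 1)) ≠ 0 := by positivity
      -- relations
      have hNp : poch' (X + (↑n + 1) - (↑c' + 2)) (c'+2)
          = (X + (↑n + 1) - (↑c' + 2)) * N := by
        rw [poch'_succ']
        congr 2
        push_cast
        ring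
      have hDp : poch' (↑n + 1 : ℚ) (c'+2) = D * ((↑n + 1 : ℚ) + (↑c' + 1)) := by
        rw [show c'+2 = (c'+1)+1 from rfl, poch'_succ, ← hDdef]
        push_cast
        ring
      have hNm : poch' (X + (↑n + 1) - ↑c') c' = N / (X + (↑n+1) - (↑c'+1)) := by
        rw [eq_div_iff h1, hNdef]
        rw [show X + (↑n + 1) - (↑c' + 1) = (X + (↑n+1) - ↑c') - 1 by ring]
        rw [poch'_succ']
        rw [show (X + (↑n+1) - ↑c') - 1 + 1 = X + (↑n+1) - ↑c' by ring]
        ring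
      have hDm : poch' (↑n + 1 : ℚ) c' = D / ((↑n + 1 : ℚ) + ↑c') := by
        have hnc : ((n:ℚ) + 1 + c') ≠ 0 := by positivity
        rw [eq_div_iff hnc, hDdef, poch'_succ]
      rw [hNp, hDp, hNm, hDm]
      have hfrac : qp * ((X + (↑n + 1) - (↑c' + 2)) * N / (D * ((↑n+1:ℚ) + (↑c'+1))))
          * (qm * ((N / (X + (↑n+1) - (↑c'+1))) / (D / ((↑n+1:ℚ) + ↑c'))))
          * ((X + (↑n+1) - (↑c'+1)) * ((↑n+1:ℚ) + (↑c'+1)))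
          = (qp * qm * ((X + ↑n - (↑c'+1)) * (↑n + (↑c'+1)))) * (N^2/D^2) := by
        field_simp
        ring
      rw [hfrac, ih]
      field_simp

lemma keylemma {X : ℚ} (hX : ∀ z : ℤ, X + (z:ℚ) ≠ 0) (c' n : ℕ) :
    Pp X (c'+1) (n+2) * Pp X (c'+1) n
      = Pp X (c'+1) (n+1)^2 - Pp X (c'+2) (n+1) * Pp X c' (n+1) := by
  have hR := auxR hX c' (n+1)
  rw [show n+2 = (n+1)+1 from rfl, Pp_succ, Pp_succ X (c'+1) n]
  rw [Pp_succ X (c'+1) n] at hR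
  push_cast
  push_cast at hR
  set Pn := Pp X (c'+1) n
  set qp := Pp X (c'+2) (n+1)
  set qm := Pp X c' (n+1)
  set N1 := poch' (X + (↑n + 1) - (↑c' + 1)) (c'+1) with hN1def
  set D1 := poch' (↑n + 1 : ℚ) (c'+1) with hD1def
  -- nonzero facts
  have hD10 : D1 ≠ 0 := by
    rw [hD1def]
    have h : ((n+1:ℕ):ℚ) = (↑n + 1 : ℚ) := by push_cast; ring
    rw [← h]
    exact ne_of_gt (poch'_nat_pos (n+1) (c'+1) (by omega))
  have hN10 : N1 ≠ 0 := by
    rw [hN1def]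
    have h : (X + (↑n + 1) - (↑c' + 1)) = X + ((n+1:ℕ):ℚ) - ((c'+1:ℕ):ℚ) := by
      push_cast; ring
    rw [h]
    exact pochX_ne hX (n+1) (c'+1) (c'+1)
  have hB : (X + (↑n+1) - (↑c'+1)) ≠ 0 := by
    have := factor_ne hX (n+1) (c'+1) 0
    push_cast at this
    simpa using this
  have hn1 : ((n:ℚ) + 1) ≠ 0 := by positivity
  have hf : ((n:ℚ) + 1 + (↑c' + 1)) ≠ 0 := by positivity
  -- relations for the (n+2) step factors
  have hN2 : poch' (X + (↑n + 1 + 1) - (↑c' + 1)) (c'+1)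
      = N1 * ((X + (↑n+1) - (↑c'+1)) + (↑c'+1)) / (X + (↑n+1) - (↑c'+1)) := by
    rw [eq_div_iff hB]
    have := poch'_shift (X + (↑n+1) - (↑c'+1)) (c'+1)
    rw [show X + (↑n+1) - (↑c'+1) + 1 = X + (↑n + 1 + 1) - (↑c' + 1) by ring] at this
    push_cast at this
    rw [← hN1def] at this
    linear_combination this
  have hD2 : poch' (↑n + 1 + 1 : ℚ) (c'+1)
      = D1 * ((↑n+1:ℚ) + (↑c'+1)) / (↑n+1) := by
    rw [eq_div_iff hn1]
    have := poch'_shift ((n:ℚ)+1) (c'+1)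
    rw [show (n:ℚ) + 1 + 1 = (↑n + 1 + 1 : ℚ) by ring] at this
    push_cast at this
    rw [← hD1def] at this
    linear_combination this
  rw [hN2, hD2]
  have hpm : qp * qm = (Pn * (N1/D1))^2 * ((X - (↑c'+1)) * ((c':ℚ)+1))
      / ((X + (↑n+1) - (↑c'+1)) * ((↑n+1:ℚ) + (↑c'+1))) := by
    rw [eq_div_iff (mul_ne_zero hB hf)]
    linear_combination hR
  rw [hpm]
  field_simp
  ring

theorem Dm_det_eq_Pp {X : ℚ} (hX : ∀ z : ℤ, X + (z:ℚ) ≠ 0) :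
    ∀ n c : ℕ, (Dm X c n).det = Pp X c n := by
  intro n
  induction n using Nat.strong_induction_on with
  | _ n ih =>
    match n, ih with
    | 0, _ => exact fun c => Dm_det_zero X c
    | 1, _ => exact fun c => Dm_det_one X c
    | (k+2), ih =>
      intro c
      cases c with
      | zero => exact Dm_det_c_zero X (k+2)
      | succ c' =>
        have hdj := dj (Dm X (c'+1) (k+2))
        rw [Dm_sub_inner, Dm_sub_ss, Dm_sub_cc, Dm_sub_sc, Dm_sub_cs] at hdj
        rw [ih k (by omega) (c'+1), ih (k+1) (by omega) (c'+1), ih (k+1) (by omega) (c'+2),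
          ih (k+1) (by omega) c'] at hdj
        have hkey := keylemma hX c' k
        have h2 : (Dm X (c'+1) (k+2)).det * Pp X (c'+1) k
            = Pp X (c'+1) (k+2) * Pp X (c'+1) k := by
          rw [hdj, hkey]
          ring
        exact mul_right_cancel₀ (Pp_ne_zero hX (c'+1) k) h2

-- ===================== polynomial wrapper =====================

noncomputable def gbP (k : ℤ) : Polynomial ℚ :=
  if 0 ≤ k then Polynomial.C ((k.toNat.factorial : ℚ))⁻¹
    * ∏ m ∈ Finset.range k.toNat, (Polynomial.X - Polynomial.C (m:ℚ))
  else 0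

lemma gbP_eval (x : ℚ) (k : ℤ) : (gbP k).eval x = gbinom x k := by
  unfold gbP gbinom
  split_ifs with h
  · rw [Polynomial.eval_mul, Polynomial.eval_C, Polynomial.eval_prod]
    rw [div_eq_mul_inv, mul_comm]
    congr 1
    refine Finset.prod_congr rfl fun m _ => ?_
    simp
  · simp

noncomputable def PpP (c n : ℕ) : Polynomial ℚ :=
  ∏ i ∈ Finset.Icc 1 n, (Polynomial.C ((poch' (i:ℚ) c)⁻¹)
    * ∏ m ∈ Finset.range c, (Polynomial.X + Polynomial.C ((i:ℚ) - c + m)))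

lemma PpP_eval (x : ℚ) (c n : ℕ) : (PpP c n).eval x = Pp x c n := by
  unfold PpP Pp
  rw [Polynomial.eval_prod]
  refine Finset.prod_congr rfl fun i _ => ?_
  rw [Polynomial.eval_mul, Polynomial.eval_C, Polynomial.eval_prod]
  rw [div_eq_mul_inv, mul_comm]
  congr 1
  rw [poch']
  refine Finset.prod_congr rfl fun m _ => ?_
  simp
  ring

theorem Dm_det_eq_Pp_all (X : ℚ) (c n : ℕ) : (Dm X c n).det = Pp X c n := by
  classical
  set p := (Matrix.det (Matrix.of fun i j : Fin n => gbP ((i:ℤ) - (j:ℤ) + c))) - PpP c n with hp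
  have heval : ∀ x : ℚ, p.eval x = (Dm x c n).det - Pp x c n := by
    intro x
    rw [hp, Polynomial.eval_sub, PpP_eval]
    congr 1
    have hdet := RingHom.map_det (Polynomial.evalRingHom x)
      (Matrix.of fun i j : Fin n => gbP ((i:ℤ) - (j:ℤ) + c))
    rw [RingHom.mapMatrix_apply] at hdet
    have hmap : ((Matrix.of fun i j : Fin n => gbP ((i:ℤ) - (j:ℤ) + c)).map
        (Polynomial.evalRingHom x)) = Dm x c n := by
      ext i j
      simp only [Matrix.map_apply, Matrix.of_apply, Polynomial.coe_evalRingHom]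
      rw [gbP_eval]
      rfl
    rw [hmap] at hdet
    exact hdet
  have hp0 : p = 0 := by
    by_contra h
    have hfin := Polynomial.finite_setOf_isRoot h
    have hsub : Set.range (fun k : ℕ => (k:ℚ) + 1/2) ⊆ { x | Polynomial.IsRoot p x } := by
      rintro x ⟨k, rfl⟩
      have hX : ∀ z : ℤ, ((k:ℚ) + 1/2) + (z:ℚ) ≠ 0 := by
        intro z hz
        have h2 : ((2*(k:ℤ) + 1 + 2*z : ℤ) : ℚ) = 0 := by
          push_cast
          linarith
        have h3 : (2*(k:ℤ) + 1 + 2*z : ℤ) = 0 := by exact_mod_cast h2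
        omega
      show Polynomial.IsRoot p _
      rw [Polynomial.IsRoot, heval, Dm_det_eq_Pp hX, sub_self]
    have hinj : Function.Injective (fun k : ℕ => (k:ℚ) + 1/2) := by
      intro a b hab
      simp only [add_left_inj] at hab
      exact_mod_cast hab
    have hinf : Set.Infinite { x | Polynomial.IsRoot p x } :=
      Set.infinite_of_injective_forall_mem hinj (fun k => hsub ⟨k, rfl⟩)
    exact hinf hfin
  have := heval X
  rw [hp0, Polynomial.eval_zero] at this
  linarith [this]

/-- Lemma 3: `det_{1≤i,j≤n} C(X, i-j+c) = ∏_{i=1}^n (X+i-c)_c/(i)_c`. -/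
theorem lemma3 (X : ℚ) (c : ℕ) (n : ℕ) :
    Matrix.det (fun i j : Fin n =>
        gbinom X ((((i : ℕ) : ℤ) + 1) - (((j : ℕ) : ℤ) + 1) + (c : ℤ))) =
      ∏ i ∈ Finset.Icc 1 n, poch (X + (i : ℚ) - c) (c : ℤ) / poch (i : ℚ) (c : ℤ) := by
  have hm : (fun i j : Fin n =>
      gbinom X ((((i : ℕ) : ℤ) + 1) - (((j : ℕ) : ℤ) + 1) + (c : ℤ))) = Dm X c n := by
    funext i j
    show gbinom X _ = gbinom X _
    congr 1
    ring
  rw [hm, Dm_det_eq_Pp_all, Pp]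
  refine Finset.prod_congr rfl fun i _ => ?_
  rw [poch_eq_poch', poch_eq_poch']
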